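/- arXiv:1807.06516 — 2 statements merged into one kernel-verified Lean document; each statement's English description precedes it below -/
import Mathlib

section
/- Let M be a matroid on a finite linearly ordered ground set E and let B be a basis of M with active filtration ∅ = F'_ε ⊂ … ⊂ F'_0 = F_c = F_0 ⊂ … ⊂ F_ι = E. Then the active filtration of the basis E \ B of the dual matroid M* is ∅ = E \ F_ι ⊂ … ⊂ E \ F_0 = E \ F_c = E \ F'_0 ⊂ … ⊂ E \ F'_ε = E, with cyclic flat E \ F_c. -/
open Matroid Set

namespace ActiveBij

variable {α : Type*}

/-- Deletion of a set of elements from a matroid. -/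
def del (M : Matroid α) (D : Set α) : Matroid α := M ↾ (M.E \ D)

/-- Contraction of a set of elements of a matroid. -/
def con (M : Matroid α) (C : Set α) : Matroid α := (del M✶ C)✶

/-- The minor `M(G)/F` : restriction to `G` followed by contraction of `F`. -/
def minor (M : Matroid α) (G F : Set α) : Matroid α := con (M ↾ G) F

/-- A circuit of a matroid : a minimal dependent set. -/
def Cct (M : Matroid α) (C : Set α) : Prop := Minimal M.Dep C

/-- A cocircuit of a matroid : a circuit of the dual. -/
def Cocct (M : Matroid α) (C : Set α) : Prop := Cct M✶ C

/-- The fundamental circuit of `e ∉ B` with respect to a base `B` :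
the unique circuit contained in `B ∪ {e}`. -/
def fundCct (M : Matroid α) (B : Set α) (e : α) : Set α :=
  ⋂₀ {C | Cct M C ∧ C ⊆ insert e B}

/-- The fundamental cocircuit of `b ∈ B` with respect to a base `B` :
the unique cocircuit contained in `(E \ B) ∪ {b}`. -/
def fundCocct (M : Matroid α) (B : Set α) (b : α) : Set α :=
  ⋂₀ {C | Cocct M C ∧ C ⊆ insert b (M.E \ B)}

/-- The set of internally active elements of a base `B` :
elements `b ∈ B` that are the minimum of their fundamental cocircuit. -/
def ActInt [LinearOrder α] (M : Matroid α) (B : Set α) : Set α :=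
  {b ∈ B | IsLeast (fundCocct M B b) b}

/-- The set of externally active elements of a base `B` :
elements `e ∈ M.E \ B` that are the minimum of their fundamental circuit. -/
def ActExt [LinearOrder α] (M : Matroid α) (B : Set α) : Set α :=
  {e ∈ M.E \ B | IsLeast (fundCct M B e) e}

/-- A uniactive internal base : internal activity `1` and external activity `0`. -/
def UIntBase [LinearOrder α] (M : Matroid α) (B : Set α) : Prop :=
  M.IsBase B ∧ (ActInt M B).ncard = 1 ∧ (ActExt M B).ncard = 0

/-- A uniactive external base : internal activity `0` and external activity `1`. -/
def UExtBase [LinearOrder α] (M : Matroid α) (B : Set α) : Prop :=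
  M.IsBase B ∧ (ActInt M B).ncard = 0 ∧ (ActExt M B).ncard = 1

/-- `β(M)` : the number of uniactive internal bases. -/
noncomputable def beta [LinearOrder α] (M : Matroid α) : ℕ :=
  {B : Set α | UIntBase M B}.ncard

/-- `β*(M)` : the number of uniactive external bases. -/
noncomputable def betaStar [LinearOrder α] (M : Matroid α) : ℕ :=
  {B : Set α | UExtBase M B}.ncard

/-- A connected matroid : any two elements of the ground set lie on a common circuit. -/
def Conn (M : Matroid α) : Prop :=
  M.E.Nonempty ∧ ∀ ⦃x y⦄, x ∈ M.E → y ∈ M.E →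
    (x = y ∨ ∃ C, Cct M C ∧ x ∈ C ∧ y ∈ C)

/-- A matroid consisting of a single loop. -/
def IsLoopMatroid (M : Matroid α) : Prop := ∃ e, M.E = {e} ∧ M.Dep {e}

/-- A matroid consisting of a single coloop (isthmus). -/
def IsColoopMatroid (M : Matroid α) : Prop := ∃ e, M.E = {e} ∧ M.Indep {e}

/-- A flat : a subset of the ground set whose complement is a union of cocircuits. -/
def IsFlat (M : Matroid α) (F : Set α) : Prop :=
  F ⊆ M.E ∧ ∃ S : Set (Set α), (∀ C ∈ S, Cocct M C) ∧ M.E \ F = ⋃₀ S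

/-- A dual-flat : a union of circuits. -/
def IsDualFlat (M : Matroid α) (F : Set α) : Prop :=
  ∃ S : Set (Set α), (∀ C ∈ S, Cct M C) ∧ F = ⋃₀ S

/-- A cyclic flat : both a flat and a dual-flat. -/
def IsCyclicFlat (M : Matroid α) (F : Set α) : Prop :=
  IsFlat M F ∧ IsDualFlat M F

/-- The data of a filtration : `∅ = F'_ε ⊂ ⋯ ⊂ F'_0 = F_c = F_0 ⊂ ⋯ ⊂ F_ι = E`. -/
structure Filtration (α : Type*) where
  ι : ℕ
  ε : ℕ
  F : Fin (ι + 1) → Set α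
  F' : Fin (ε + 1) → Set α

/-- The `k`-th internal minor `M(F_k)/F_{k-1}` induced by a filtration. -/
def intMinor (M : Matroid α) (f : Filtration α) (k : Fin f.ι) : Matroid α :=
  minor M (f.F k.succ) (f.F k.castSucc)

/-- The `k`-th external minor `M(F'_{k-1})/F'_k` induced by a filtration. -/
def extMinor (M : Matroid α) (f : Filtration α) (k : Fin f.ε) : Matroid α :=
  minor M (f.F' k.castSucc) (f.F' k.succ)

/-- The filtration property : strictly nested subsets from `∅` to `M.E` through `F_c`,
with the minima of the successive differences increasing on each side of `F_c`. -/
def IsFiltration [LinearOrder α] (M : Matroid α) (f : Filtration α) : Prop :=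
  f.F' (Fin.last f.ε) = ∅ ∧
  f.F' 0 = f.F 0 ∧
  f.F (Fin.last f.ι) = M.E ∧
  (∀ k : Fin f.ι, f.F k.castSucc ⊂ f.F k.succ) ∧
  (∀ k : Fin f.ε, f.F' k.succ ⊂ f.F' k.castSucc) ∧
  (∀ j k : Fin f.ι, j < k → ∀ a b : α,
    IsLeast (f.F j.succ \ f.F j.castSucc) a →
    IsLeast (f.F k.succ \ f.F k.castSucc) b → a < b) ∧
  (∀ j k : Fin f.ε, j < k → ∀ a b : α,
    IsLeast (f.F' j.castSucc \ f.F' j.succ) a →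
    IsLeast (f.F' k.castSucc \ f.F' k.succ) b → a < b)

/-- A connected filtration : a filtration all of whose induced internal minors are
connected and not single loops, and all of whose induced external minors are connected
and not single coloops. -/
def IsConnFiltration [LinearOrder α] (M : Matroid α) (f : Filtration α) : Prop :=
  IsFiltration M f ∧
  (∀ k : Fin f.ι, Conn (intMinor M f k) ∧ ¬ IsLoopMatroid (intMinor M f k)) ∧
  (∀ k : Fin f.ε, Conn (extMinor M f k) ∧ ¬ IsColoopMatroid (extMinor M f k))

/-- An active filtration of a base `B` : a filtration such that `B` induces a uniactive
internal base of each internal minor and a uniactive external base of each external minor. -/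
def IsActiveFiltration [LinearOrder α] (M : Matroid α) (B : Set α) (f : Filtration α) : Prop :=
  IsFiltration M f ∧
  (∀ k : Fin f.ι, UIntBase (intMinor M f k) (B ∩ (f.F k.succ \ f.F k.castSucc))) ∧
  (∀ k : Fin f.ε, UExtBase (extMinor M f k) (B ∩ (f.F' k.castSucc \ f.F' k.succ)))

/-- The subset `F(X)` attached to a base `B` and a set `X` of internally active elements :
`B ∩ F` is a base of `M(F)`, the activities of the induced bases of `M(F)` and `M/F`
split those of `B`, with `Int` of the contraction part equal to `X`. -/
def DecompSet [LinearOrder α] (M : Matroid α) (B X F : Set α) : Prop :=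
  F ⊆ M.E ∧
  (M ↾ F).IsBase (B ∩ F) ∧
  ActInt (M ↾ F) (B ∩ F) = ActInt M B \ X ∧
  ActExt (M ↾ F) (B ∩ F) = ActExt M B ∧
  ActInt (con M F) (B \ F) = X ∧
  ActExt (con M F) (B \ F) = ∅

/-- The dual of a filtration : complement every subset and exchange the two sides. -/
def dualFil (M : Matroid α) (f : Filtration α) : Filtration α :=
  ⟨f.ε, f.ι, fun k => M.E \ f.F' k, fun k => M.E \ f.F k⟩

/-- The set of subsets occurring in a filtration. -/
def termsOf (f : Filtration α) : Set (Set α) :=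
  {H | ∃ k, f.F k = H} ∪ {H | ∃ k, f.F' k = H}

end ActiveBij

namespace ActiveBij

lemma diff_diff_diff_eq {E A C : Set α} (hC : C ⊆ E) : (E \ A) \ (E \ C) = C \ A := by
  ext x; constructor
  · rintro ⟨⟨hxE, hxA⟩, h2⟩
    refine ⟨by_contra fun h => h2 ⟨hxE, h⟩, hxA⟩
  · rintro ⟨hxC, hxA⟩
    exact ⟨⟨hC hxC, hxA⟩, fun h => h.2 hxC⟩

lemma ssubset_compl {E A C : Set α} (h : A ⊂ C) (hC : C ⊆ E) : E \ C ⊂ E \ A := by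
  obtain ⟨x, hxC, hxA⟩ := exists_of_ssubset h
  refine ⟨diff_subset_diff_right h.subset, fun hsub => ?_⟩
  exact (hsub ⟨hC hxC, hxA⟩).2 hxC

/-- Key one-directional lemma for minor duality. -/
lemma key (hFG : F ⊆ G) (hG : G ⊆ M.E) (hBS : B ⊆ G \ F)
    (h : (M ↾ G)✶.IsBasis B (G \ F)) :
    (M✶ ↾ (M.E \ F))✶.IsBasis ((G \ F) \ B) (G \ F) := by
  set E := M.E
  set S := G \ F with hS
  have hSG : S ⊆ G := diff_subset
  have hSEF : S ⊆ E \ F := diff_subset_diff_left hG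
  obtain ⟨W, hW, hBW⟩ := h.exists_isBase
  have hWG : W ⊆ G := hW.subset_ground
  -- (G\W) ∩ F is an M-basis of F
  have hGS : G \ S = F := by rw [hS, diff_diff_cancel_left hFG]
  have h1 : (M ↾ G).IsBasis ((G \ W) ∩ F) F := by
    have := (hW.inter_isBasis_iff_compl_inter_isBasis_dual (X := S) hSG).mp (hBW ▸ h)
    rw [dual_dual] at this
    simpa [hGS] using this
  have hMF : M.IsBasis ((G \ W) ∩ F) F := ((isBasis_restrict_iff hG).mp h1).1
  -- G \ W is an M-basis of G
  have hB1 : (M ↾ G).IsBase (G \ W) := by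
    have := (dual_isBase_iff (M := M ↾ G) (B := W) hWG).mp hW
    simpa using this
  have hMG : M.IsBasis (G \ W) G := (isBase_restrict_iff hG).mp hB1
  obtain ⟨Bh, hBh, hB1e⟩ := hMG.exists_isBase
  have hBhF : Bh ∩ F = (G \ W) ∩ F := by
    rw [hB1e]; ext x
    simp only [mem_inter_iff]
    exact ⟨fun h => ⟨⟨h.1, hFG h.2⟩, h.2⟩, fun h => ⟨h.1.1, h.2⟩⟩
  have hd1 : M✶.IsBasis ((E \ Bh) ∩ (E \ F)) (E \ F) :=
    (hBh.inter_isBasis_iff_compl_inter_isBasis_dual (X := F) (hFG.trans hG)).mp (by rw [hBhF]; exact hMF)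
  have hd2 : M✶.IsBasis ((E \ Bh) ∩ (E \ G)) (E \ G) :=
    (hBh.inter_isBasis_iff_compl_inter_isBasis_dual (X := G) hG).mp (by rw [← hB1e]; exact hMG)
  set B2 := (E \ Bh) ∩ (E \ F) with hB2def
  have hB2sub : B2 ⊆ E \ F := inter_subset_right
  have hN'B2 : (M✶ ↾ (E \ F)).IsBase B2 := hd1.isBase_restrict
  have hW' : (M✶ ↾ (E \ F))✶.IsBase ((E \ F) \ B2) := by
    refine (dual_isBase_iff diff_subset).mpr ?_
    show (M✶ ↾ (E \ F)).IsBase ((E \ F) \ ((E \ F) \ B2))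
    rwa [diff_diff_cancel_left hB2sub]
  have hEFS : (E \ F) \ S = E \ G := by
    ext x
    simp only [hS, mem_diff, not_and, not_not]
    constructor
    · rintro ⟨⟨hxE, hxF⟩, h2⟩
      exact ⟨hxE, fun hxG => hxF (h2 hxG)⟩
    · rintro ⟨hxE, hxG⟩
      exact ⟨⟨hxE, fun hxF => hxG (hFG hxF)⟩, fun hxG' => absurd hxG' hxG⟩
  have hfin : (M✶ ↾ (E \ F))✶.IsBasis (((E \ F) \ B2) ∩ S) S := by
    rw [hW'.inter_isBasis_iff_compl_inter_isBasis_dual (X := S) hSEF, dual_dual]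
    show (M✶ ↾ (E \ F)).IsBasis
      (((E \ F) \ ((E \ F) \ B2)) ∩ ((E \ F) \ S)) ((E \ F) \ S)
    rw [diff_diff_cancel_left hB2sub, hEFS]
    refine (isBasis_restrict_iff (show E \ F ⊆ M✶.E from diff_subset)).mpr
      ⟨?_, diff_subset_diff_right hFG⟩
    have h5 : B2 ∩ (E \ G) = (E \ Bh) ∩ (E \ G) := by
      rw [hB2def, inter_assoc, inter_eq_self_of_subset_right (diff_subset_diff_right hFG)]
    rw [h5]; exact hd2
  have heq : ((E \ F) \ B2) ∩ S = S \ B := by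
    ext x
    constructor
    · rintro ⟨⟨hxEF, hxB2⟩, hxS⟩
      have hxBh : x ∈ Bh := by
        by_contra hc
        exact hxB2 ⟨⟨hxEF.1, hc⟩, hxEF⟩
      have hxGW : x ∈ G \ W := by rw [hB1e]; exact ⟨hxBh, hSG hxS⟩
      refine ⟨hxS, fun hxB => ?_⟩
      rw [hBW] at hxB
      exact hxGW.2 hxB.1
    · rintro ⟨hxS, hxB⟩
      have hxW : x ∉ W := fun hw => hxB (by rw [hBW]; exact ⟨hw, hxS⟩)
      have hxBh : x ∈ Bh := by
        have h3 : x ∈ G \ W := ⟨hSG hxS, hxW⟩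
        rw [hB1e] at h3; exact h3.1
      exact ⟨⟨hSEF hxS, fun hb => hb.1.2 hxBh⟩, hxS⟩
  rwa [heq] at hfin


lemma minor_dual {M : Matroid α} {F G : Set α} (hFG : F ⊆ G) (hG : G ⊆ M.E) :
    (minor M G F)✶ = minor M✶ (M.E \ F) (M.E \ G) := by
  have hS : (M.E \ F) \ (M.E \ G) = G \ F := diff_diff_diff_eq hG
  show ((del (M ↾ G)✶ F)✶)✶ = (del (M✶ ↾ (M.E \ F))✶ (M.E \ G))✶
  rw [dual_dual]
  show (M ↾ G)✶ ↾ ((M ↾ G)✶.E \ F)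
      = ((M✶ ↾ (M.E \ F))✶ ↾ ((M✶ ↾ (M.E \ F))✶.E \ (M.E \ G)))✶
  rw [show (M✶ ↾ (M.E \ F))✶.E \ (M.E \ G) = G \ F from hS,
    show (M ↾ G)✶.E \ F = G \ F from rfl]
  refine ext_isBase rfl (fun ⦃B⦄ hB => ?_)
  have hBS : B ⊆ G \ F := hB
  have hSG : G \ F ⊆ G := diff_subset
  have hSEF : G \ F ⊆ M.E \ F := diff_subset_diff_left hG
  rw [isBase_restrict_iff' (M := (M ↾ G)✶), isBasis'_iff_isBasis hSG]
  constructor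
  · intro h
    have hk := key hFG hG hBS h
    refine (dual_isBase_iff (show B ⊆ ((M✶ ↾ (M.E \ F))✶ ↾ (G \ F)).E from hBS)).mpr ?_
    show ((M✶ ↾ (M.E \ F))✶ ↾ (G \ F)).IsBase ((G \ F) \ B)
    rw [isBase_restrict_iff' (M := (M✶ ↾ (M.E \ F))✶), isBasis'_iff_isBasis hSEF]
    exact hk
  · intro h
    have h' : (M✶ ↾ (M.E \ F))✶.IsBasis ((G \ F) \ B) (G \ F) := by
      have := (dual_isBase_iff (show B ⊆ ((M✶ ↾ (M.E \ F))✶ ↾ (G \ F)).E from hBS)).mp h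
      rw [show ((M✶ ↾ (M.E \ F))✶ ↾ (G \ F)).E \ B = (G \ F) \ B from rfl] at this
      rw [isBase_restrict_iff' (M := (M✶ ↾ (M.E \ F))✶), isBasis'_iff_isBasis hSEF] at this
      exact this
    have hk := key (M := M✶) (F := M.E \ G) (G := M.E \ F) (B := (G \ F) \ B)
      (diff_subset_diff_right hFG) (show M.E \ F ⊆ M✶.E from diff_subset)
      (by rw [hS]; exact diff_subset) (by rw [hS]; exact h')
    rw [hS, diff_diff_cancel_left hBS,
      show M✶.E \ (M.E \ G) = G from diff_diff_cancel_left hG, dual_dual] at hk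
    exact hk

lemma fundCct_dual (M : Matroid α) (B : Set α) (e : α) :
    fundCct M✶ (M.E \ B) e = fundCocct M B e := rfl

lemma fundCocct_dual {M : Matroid α} {B : Set α} (hB : B ⊆ M.E) (b : α) :
    fundCocct M✶ (M.E \ B) b = fundCct M B b := by
  have h2 : M✶.E \ (M.E \ B) = B := by
    rw [dual_ground, diff_diff_cancel_left hB]
  have hset : {C | Cocct M✶ C ∧ C ⊆ insert b (M✶.E \ (M.E \ B))}
      = {C | Cct M C ∧ C ⊆ insert b B} := by
    ext C
    have h1 : Cocct M✶ C ↔ Cct M C := by unfold Cocct; rw [dual_dual]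
    rw [mem_setOf_eq, mem_setOf_eq, h1, h2]
  unfold fundCocct fundCct
  rw [hset]

variable [LinearOrder α]

lemma actInt_dual {M : Matroid α} {B : Set α} (hB : B ⊆ M.E) :
    ActInt M✶ (M.E \ B) = ActExt M B := by
  unfold ActInt ActExt
  ext x
  simp only [mem_setOf_eq, dual_ground]
  rw [fundCocct_dual hB]

lemma actExt_dual {M : Matroid α} {B : Set α} (hB : B ⊆ M.E) :
    ActExt M✶ (M.E \ B) = ActInt M B := by
  have h2 : M✶.E \ (M.E \ B) = B := by
    rw [dual_ground, diff_diff_cancel_left hB]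
  unfold ActInt ActExt
  ext x
  simp only [mem_setOf_eq]
  rw [fundCct_dual, h2]

lemma uIntBase_dual {M : Matroid α} {B : Set α} (h : UIntBase M B) :
    UExtBase M✶ (M.E \ B) := by
  obtain ⟨hb, hi, he⟩ := h
  have hBE := hb.subset_ground
  refine ⟨hb.compl_isBase_dual, ?_, ?_⟩
  · rw [actInt_dual hBE]; exact he
  · rw [actExt_dual hBE]; exact hi

lemma uExtBase_dual {M : Matroid α} {B : Set α} (h : UExtBase M B) :
    UIntBase M✶ (M.E \ B) := by
  obtain ⟨hb, hi, he⟩ := h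
  have hBE := hb.subset_ground
  refine ⟨hb.compl_isBase_dual, ?_, ?_⟩
  · rw [actInt_dual hBE]; exact he
  · rw [actExt_dual hBE]; exact hi

lemma compl_inter_diff {E B D : Set α} (hD : D ⊆ E) :
    (E \ B) ∩ D = D \ (B ∩ D) := by
  ext x
  constructor
  · rintro ⟨⟨hxE, hxB⟩, hxD⟩
    exact ⟨hxD, fun hh => hxB hh.1⟩
  · rintro ⟨hxD, hxB⟩
    exact ⟨⟨hD hxD, fun hb => hxB ⟨hb, hxD⟩⟩, hxD⟩

/-- The active filtration of the base `E \ B` of the dual matroid is the dual of the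
active filtration of `B`, with complementary cyclic flat. -/
theorem stmt15 {α : Type*} [LinearOrder α] (M : Matroid α) [M.Finite]
    (B : Set α) (hB : M.IsBase B) (f : Filtration α)
    (hf : IsActiveFiltration M B f) :
    IsActiveFiltration M✶ (M.E \ B) (dualFil M f) ∧
    (dualFil M f).F 0 = M.E \ f.F 0 := by
  obtain ⟨hfil, hint, hext⟩ := hf
  obtain ⟨h1, h2, h3, h4, h5, h6, h7⟩ := hfil
  have hFmono : Monotone f.F := (Fin.strictMono_iff_lt_succ.mpr h4).monotone
  have hF'anti : Antitone f.F' := (Fin.strictAnti_iff_succ_lt.mpr h5).antitone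
  have hFE : ∀ k, f.F k ⊆ M.E := fun k => by
    rw [← h3]; exact hFmono (Fin.le_last k)
  have hF'E : ∀ k, f.F' k ⊆ M.E := fun k => by
    refine (hF'anti (Fin.zero_le k)).trans ?_
    rw [h2]; exact hFE 0
  refine ⟨⟨⟨?_, ?_, ?_, ?_, ?_, ?_, ?_⟩, ?_, ?_⟩, ?_⟩
  · show M.E \ f.F (Fin.last f.ι) = ∅
    rw [h3, diff_self]
  · show M.E \ f.F 0 = M.E \ f.F' 0
    rw [h2]
  · show M.E \ f.F' (Fin.last f.ε) = M✶.E
    rw [h1, diff_empty, dual_ground]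
  · intro k
    show M.E \ f.F' k.castSucc ⊂ M.E \ f.F' k.succ
    exact ssubset_compl (h5 k) (hF'E _)
  · intro k
    show M.E \ f.F k.succ ⊂ M.E \ f.F k.castSucc
    exact ssubset_compl (h4 k) (hFE _)
  · intro j k hjk a b ha hb
    rw [show (dualFil M f).F j.succ \ (dualFil M f).F j.castSucc
        = f.F' j.castSucc \ f.F' j.succ from diff_diff_diff_eq (hF'E _)] at ha
    rw [show (dualFil M f).F k.succ \ (dualFil M f).F k.castSucc
        = f.F' k.castSucc \ f.F' k.succ from diff_diff_diff_eq (hF'E _)] at hb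
    exact h7 j k hjk a b ha hb
  · intro j k hjk a b ha hb
    rw [show (dualFil M f).F' j.castSucc \ (dualFil M f).F' j.succ
        = f.F j.succ \ f.F j.castSucc from diff_diff_diff_eq (hFE _)] at ha
    rw [show (dualFil M f).F' k.castSucc \ (dualFil M f).F' k.succ
        = f.F k.succ \ f.F k.castSucc from diff_diff_diff_eq (hFE _)] at hb
    exact h6 j k hjk a b ha hb
  · -- internal minors of the dual
    intro k
    have hk := hext k
    have hdual := uExtBase_dual hk
    have hm : intMinor M✶ (dualFil M f) k = (extMinor M f k)✶ :=
      (minor_dual (M := M) (F := f.F' k.succ) (G := f.F' k.castSucc)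
        (h5 k).subset (hF'E _)).symm
    have hset : (M.E \ B) ∩ ((dualFil M f).F k.succ \ (dualFil M f).F k.castSucc)
        = (extMinor M f k).E \ (B ∩ (f.F' k.castSucc \ f.F' k.succ)) := by
      show (M.E \ B) ∩ ((M.E \ f.F' k.succ) \ (M.E \ f.F' k.castSucc))
          = (f.F' k.castSucc \ f.F' k.succ) \ (B ∩ (f.F' k.castSucc \ f.F' k.succ))
      refine (congrArg ((M.E \ B) ∩ ·) (diff_diff_diff_eq (A := f.F' k.succ) (hF'E _))).trans ?_
      exact compl_inter_diff (diff_subset.trans (hF'E _))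
    rw [hm, hset]
    exact hdual
  · -- external minors of the dual
    intro k
    have hk := hint k
    have hdual := uIntBase_dual hk
    have hm : extMinor M✶ (dualFil M f) k = (intMinor M f k)✶ :=
      (minor_dual (M := M) (F := f.F k.castSucc) (G := f.F k.succ)
        (h4 k).subset (hFE _)).symm
    have hset : (M.E \ B) ∩ ((dualFil M f).F' k.castSucc \ (dualFil M f).F' k.succ)
        = (intMinor M f k).E \ (B ∩ (f.F k.succ \ f.F k.castSucc)) := by
      show (M.E \ B) ∩ ((M.E \ f.F k.castSucc) \ (M.E \ f.F k.succ))
          = (f.F k.succ \ f.F k.castSucc) \ (B ∩ (f.F k.succ \ f.F k.castSucc))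
      refine (congrArg ((M.E \ B) ∩ ·) (diff_diff_diff_eq (A := f.F k.castSucc) (hFE _))).trans ?_
      exact compl_inter_diff (diff_subset.trans (hFE _))
    rw [hm, hset]
    exact hdual
  · show M.E \ f.F' 0 = M.E \ f.F 0
    rw [h2]


end ActiveBij
end

section
/- Let M be a matroid on a finite linearly ordered ground set E and let B be a basis of M. For a subset X ⊆ Int(B), write F(X) for the unique subset of E such that B ∩ F(X) is a basis of M(F(X)), Int_{M(F(X))}(B ∩ F(X)) = Int_M(B) \ X, Ext_{M(F(X))}(B ∩ F(X)) = Ext_M(B), Int_{M/F(X)}(B \ F(X)) = X, and Ext_{M/F(X)}(B \ F(X)) = ∅. Let X = Y ⊎ Z be a partition of X. Then Z ⊆ Int_{M(F(Y))}(B ∩ F(Y)), and F(X) equals the subset obtained by applying the same unique-subset construction to the subset Z relative to the basis B ∩ F(Y) of the restriction M(F(Y)). -/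
open Matroid Set

open Matroid Set

namespace ActiveBij

variable {α : Type*} {M : Matroid α} {B C D F G I J R W X : Set α} {e b x y : α}

@[simp] lemma con_ground (M : Matroid α) (C : Set α) : (con M C).E = M.E \ C := rfl

lemma con_dual (M : Matroid α) (C : Set α) : (con M C)✶ = M✶ ↾ (M.E \ C) := by
  simp only [con, dual_dual, del, dual_ground]

lemma del_eq_restrict (hF : F ⊆ M.E) : del M (M.E \ F) = M ↾ F := by
  rw [del, diff_diff_cancel_left hF]

lemma restrict_dual (hF : F ⊆ M.E) : (M ↾ F)✶ = con M✶ (M.E \ F) := by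
  rw [con, del]
  simp [diff_diff_cancel_left hF]

lemma cct_restrict (hR : R ⊆ M.E) : Cct (M ↾ R) C ↔ Cct M C ∧ C ⊆ R := by
  have hdep : ∀ D : Set α, (M ↾ R).Dep D ↔ M.Dep D ∧ D ⊆ R := by
    intro D
    rw [restrict_dep_iff, dep_iff]
    constructor
    · rintro ⟨h1, h2⟩; exact ⟨⟨h1, h2.trans hR⟩, h2⟩
    · rintro ⟨⟨h1, _⟩, h2⟩; exact ⟨h1, h2⟩
  constructor
  · rintro ⟨h1, h2⟩
    rw [hdep] at h1
    refine ⟨⟨h1.1, fun D hD hDC ↦ h2 (by rw [hdep]; exact ⟨hD, hDC.trans h1.2⟩) hDC⟩, h1.2⟩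
  · rintro ⟨⟨h1, h2⟩, h3⟩
    exact ⟨(hdep C).2 ⟨h1, h3⟩, fun D hD hDC ↦ h2 ((hdep D).1 hD).1 hDC⟩

lemma exists_cct_subset (hD : M.Dep D) (hfin : D.Finite) : ∃ C, Cct M C ∧ C ⊆ D := by
  obtain ⟨C, hC, hmin⟩ := Set.Finite.exists_minimalFor id {C | M.Dep C ∧ C ⊆ D}
    (hfin.finite_subsets.subset (fun C hC ↦ hC.2)) ⟨D, hD, rfl.subset⟩
  refine ⟨C, ⟨hC.1, fun D' hD' hD'C ↦ ?_⟩, hC.2⟩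
  exact (hmin ⟨hD', hD'C.trans hC.2⟩ hD'C)

lemma indep_encard_le_base (hI : M.Indep I) (hB : M.IsBase B) : I.encard ≤ B.encard := by
  obtain ⟨B', hB', hIB'⟩ := hI.exists_isBase_superset
  exact (encard_mono hIB').trans (hB'.encard_eq_encard_of_isBase hB).le

lemma basis_encard_eq (h1 : M.IsBasis I X) (h2 : M.IsBasis J X) : I.encard = J.encard :=
  h1.restrict_isBase.encard_eq_encard_of_isBase h2.restrict_isBase

lemma indep_encard_le_basis (hI : M.Indep I) (hIX : I ⊆ X) (hJ : M.IsBasis J X) :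
    I.encard ≤ J.encard :=
  indep_encard_le_base (M := M ↾ X) (by rw [restrict_indep_iff]; exact ⟨hI, hIX⟩)
    hJ.restrict_isBase


section UC

variable (hE : M.E.Finite) (hBi : M.Indep B) (he : M.Dep (insert e B))

include hBi he in
lemma not_mem_of_dep_insert : e ∉ B := by
  intro h
  rw [insert_eq_of_mem h] at he
  exact he.not_indep hBi

include hBi he in
lemma basis_insert : M.IsBasis B (insert e B) := by
  refine hBi.isBasis_of_forall_insert (subset_insert _ _) (fun x hx ↦ ?_)
  obtain rfl : x = e := by
    rcases hx.1 with h | h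
    · exact h
    · exact absurd h hx.2
  exact he

include hBi he in
lemma mem_of_cct_subset (hC : Cct M C) (hCs : C ⊆ insert e B) : e ∈ C := by
  by_contra h
  exact hC.1.not_indep (hBi.subset (fun x hx ↦ ((hCs hx).resolve_left (fun h' ↦ h (h' ▸ hx)))))

include hE hBi he in
lemma indep_insert_diff_of_cct (hC : Cct M C) (hCs : C ⊆ insert e B) (hx : x ∈ C) :
    M.Indep (insert e B \ {x}) := by
  have heB : e ∉ B := not_mem_of_dep_insert hBi he
  have hCE : C ⊆ M.E := hC.1.subset_ground
  have hCdx : M.Indep (C \ {x}) := by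
    rw [← not_dep_iff ((diff_subset).trans hCE)]
    intro hdep
    exact ((hC.2 hdep diff_subset) hx).2 rfl
  obtain ⟨J, hJ, hCJ⟩ := hCdx.subset_isBasis_of_subset (diff_subset.trans hCs) he.subset_ground
  have hJB : J.encard = B.encard := basis_encard_eq hJ (basis_insert hBi he)
  have hxJ : x ∉ J := by
    intro hxJ
    refine hC.1.not_indep (hJ.indep.subset (fun y hy ↦ ?_))
    rcases eq_or_ne y x with rfl | hne
    · exact hxJ
    · exact hCJ ⟨hy, hne⟩
  have hsub : J ⊆ insert e B \ {x} := subset_diff_singleton hJ.subset hxJ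
  have hfin : (insert e B).Finite := hE.subset he.subset_ground
  have hcard : (insert e B \ {x}).encard ≤ J.encard := by
    have h1 : (insert e B \ {x}).encard + 1 = (insert e B).encard :=
      encard_diff_singleton_add_one (hCs hx)
    have h2 : (insert e B).encard = B.encard + 1 := encard_insert_of_notMem heB
    have : (insert e B \ {x}).encard + 1 = J.encard + 1 := by rw [h1, h2, hJB]
    exact (WithTop.add_right_cancel (by exact WithTop.one_ne_top) this).le
  rw [← (hfin.diff (t := {x})).eq_of_subset_of_encard_le' hsub hcard]
  exact hJ.indep

include hE hBi he in
lemma cct_subset_unique (hC : Cct M C) (hCs : C ⊆ insert e B)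
    (hD : Cct M D) (hDs : D ⊆ insert e B) : C = D := by
  have h1 : ∀ C₁ C₂ : Set α, Cct M C₁ → C₁ ⊆ insert e B → Cct M C₂ → C₂ ⊆ insert e B →
      C₁ ⊆ C₂ := by
    intro C₁ C₂ h₁ hs₁ h₂ hs₂ x hx
    by_contra hxC₂
    exact h₂.1.not_indep ((indep_insert_diff_of_cct hE hBi he h₁ hs₁ hx).subset
      (subset_diff_singleton hs₂ hxC₂))
  exact (h1 C D hC hCs hD hDs).antisymm (h1 D C hD hDs hC hCs)

include hE hBi he in
lemma fundCct_spec : Cct M (fundCct M B e) ∧ fundCct M B e ⊆ insert e B := by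
  obtain ⟨C₀, hC₀, hC₀s⟩ := exists_cct_subset he (hE.subset he.subset_ground)
  have : {C | Cct M C ∧ C ⊆ insert e B} = {C₀} := by
    apply Subset.antisymm
    · rintro C ⟨h1, h2⟩
      exact cct_subset_unique hE hBi he h1 h2 hC₀ hC₀s
    · rintro C rfl
      exact ⟨hC₀, hC₀s⟩
  rw [fundCct, this, sInter_singleton]
  exact ⟨hC₀, hC₀s⟩

include hE hBi he in
lemma eq_fundCct_of_cct (hC : Cct M C) (hCs : C ⊆ insert e B) : C = fundCct M B e :=
  cct_subset_unique hE hBi he hC hCs (fundCct_spec hE hBi he).1 (fundCct_spec hE hBi he).2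

include hE hBi he in
lemma mem_fundCct_self : e ∈ fundCct M B e :=
  mem_of_cct_subset hBi he (fundCct_spec hE hBi he).1 (fundCct_spec hE hBi he).2

include hE hBi he in
lemma mem_fundCct_of_indep_diff (hx : x ∈ insert e B) (hi : M.Indep (insert e B \ {x})) :
    x ∈ fundCct M B e := by
  by_contra h
  exact (fundCct_spec hE hBi he).1.1.not_indep
    (hi.subset (subset_diff_singleton (fundCct_spec hE hBi he).2 h))

end UC

section Con

lemma ncard_le_of_encard_le {s t : Set α} (ht : t.Finite) (h : s.encard ≤ t.encard) :
    s.ncard ≤ t.ncard := by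
  have hs := ht.finite_of_encard_le h
  rwa [← Nat.cast_le (α := ℕ∞), hs.cast_ncard_eq, ht.cast_ncard_eq]

lemma ncard_eq_of_encard_eq {s t : Set α} (ht : t.Finite) (h : s.encard = t.encard) :
    s.ncard = t.ncard :=
  le_antisymm (ncard_le_of_encard_le ht h.le)
    (ncard_le_of_encard_le (ht.finite_of_encard_le h.le) h.ge)

lemma base_of_card (hE : M.E.Finite) (hI : M.Indep I) (hB : M.IsBase B)
    (hcard : B.encard ≤ I.encard) : M.IsBase I := by
  obtain ⟨B₃, hB₃, hIB₃⟩ := hI.exists_isBase_superset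
  have : I = B₃ := (hE.subset hB₃.subset_ground).eq_of_subset_of_encard_le' hIB₃
    ((hB₃.encard_eq_encard_of_isBase hB).le.trans hcard)
  rwa [this]

lemma con_indep_iff_exists_compl :
    (con M C).Indep I ↔ I ⊆ M.E \ C ∧ ∃ K, M✶.IsBasis K (M.E \ C) ∧ Disjoint I K := by
  rw [con, del, dual_indep_iff_exists']
  simp only [restrict_ground_eq, dual_ground]
  refine and_congr_right (fun hI ↦ ?_)
  constructor
  · rintro ⟨K, hK, hdisj⟩
    exact ⟨K, (isBase_restrict_iff (M := M✶) diff_subset).1 hK, hdisj⟩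
  · rintro ⟨K, hK, hdisj⟩
    exact ⟨K, (isBase_restrict_iff (M := M✶) diff_subset).2 hK, hdisj⟩

lemma con_indep_iff (hE : M.E.Finite) (hC : C ⊆ M.E) :
    (con M C).Indep I ↔ I ⊆ M.E \ C ∧ ∃ J, M.IsBasis J C ∧ M.Indep (I ∪ J) := by
  rw [con_indep_iff_exists_compl]
  refine and_congr_right (fun hIE ↦ ?_)
  constructor
  · rintro ⟨K, hK, hIK⟩
    obtain ⟨-, B₀, hB₀, hKB₀⟩ := (dual_indep_iff_exists').1 hK.indep
    have hsub : ∀ B', M.IsBase B' → Disjoint K B' → (M.E \ C) \ K ⊆ B' := by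
      intro B' hB' hKB' x hx
      by_contra hxB'
      have hind : M✶.Indep (insert x K) := by
        rw [dual_indep_iff_exists']
        refine ⟨insert_subset hx.1.1 (hK.subset.trans diff_subset), B', hB', ?_⟩
        rw [disjoint_left]
        rintro w (rfl | hw)
        · exact hxB'
        · exact fun hwB' ↦ (hKB'.ne_of_mem hw hwB') rfl
      exact (hK.insert_dep ⟨hx.1, hx.2⟩).not_indep hind
    have hIB₀ : I ⊆ B₀ := (subset_diff.2 ⟨hIE, hIK⟩).trans (hsub B₀ hB₀ hKB₀)
    by_cases hbasis : M.IsBasis (B₀ ∩ C) C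
    · exact ⟨B₀ ∩ C, hbasis, hB₀.indep.subset (union_subset hIB₀ inter_subset_left)⟩
    exfalso
    have hB₀C : M.Indep (B₀ ∩ C) := hB₀.indep.subset inter_subset_left
    have hnall : ¬ ∀ y ∈ C \ (B₀ ∩ C), M.Dep (insert y (B₀ ∩ C)) :=
      fun h ↦ hbasis (hB₀C.isBasis_of_forall_insert inter_subset_right h)
    push_neg at hnall
    obtain ⟨y, hy, hynd⟩ := hnall
    have hyE : y ∈ M.E := hC hy.1
    have hyB₀ : y ∉ B₀ := fun h ↦ hy.2 ⟨h, hy.1⟩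
    have hyi : M.Indep (insert y (B₀ ∩ C)) := by
      rw [← not_dep_iff (insert_subset hyE hB₀C.subset_ground)]; exact hynd
    have hdep : M.Dep (insert y B₀) := hB₀.insert_dep ⟨hyE, hyB₀⟩
    have hcct := fundCct_spec hE hB₀.indep hdep
    obtain ⟨z, hzf, hzy, hzC⟩ : ∃ z ∈ fundCct M B₀ y, z ≠ y ∧ z ∉ C := by
      by_contra h
      push_neg at h
      refine hcct.1.1.not_indep (hyi.subset fun w hw ↦ ?_)
      rcases eq_or_ne w y with rfl | hne
      · exact mem_insert _ _
      · exact mem_insert_of_mem _ ⟨(hcct.2 hw).resolve_left hne, h w hw hne⟩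
    have hzB₀ : z ∈ B₀ := (hcct.2 hzf).resolve_left hzy
    have hB₂i : M.Indep (insert y B₀ \ {z}) :=
      indep_insert_diff_of_cct hE hB₀.indep hdep hcct.1 hcct.2 hzf
    have hB₂ : M.IsBase (insert y B₀ \ {z}) := by
      refine base_of_card hE hB₂i hB₀ ?_
      have h1 : (insert y B₀ \ {z}).encard + 1 = (insert y B₀).encard :=
        encard_diff_singleton_add_one (mem_insert_of_mem _ hzB₀)
      have h2 : (insert y B₀).encard = B₀.encard + 1 := encard_insert_of_notMem hyB₀
      exact (WithTop.add_right_cancel (by exact WithTop.one_ne_top) (h1.trans h2)).ge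
    have hdisj : Disjoint K (insert y B₀ \ {z}) := by
      refine Disjoint.mono_right diff_subset (disjoint_right.2 (fun w hw ↦ ?_))
      rcases hw with rfl | hw
      · exact fun h ↦ (hK.subset h).2 hy.1
      · exact fun h ↦ (hKB₀.ne_of_mem h hw) rfl
    have hzmem : z ∈ (M.E \ C) \ K :=
      ⟨⟨hB₀.subset_ground hzB₀, hzC⟩, fun h ↦ (hKB₀.ne_of_mem h hzB₀) rfl⟩
    exact (hsub _ hB₂ hdisj hzmem).2 rfl
  · rintro ⟨J, hJ, hind⟩
    obtain ⟨B₁, hB₁, hIJB₁⟩ := hind.exists_isBase_superset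
    have hJB₁ : B₁ ∩ C = J := (hJ.eq_of_subset_indep (hB₁.indep.subset inter_subset_left)
      (subset_inter ((subset_union_right).trans hIJB₁) hJ.subset) inter_subset_right).symm
    have hIB₁ : I ⊆ B₁ := (subset_union_left).trans hIJB₁
    refine ⟨M.E \ (B₁ ∪ C), ?_, disjoint_of_subset_left hIB₁
      (disjoint_sdiff_right.mono_left subset_union_left)⟩
    have hB₁C : B₁ ∪ C ⊆ M.E := union_subset hB₁.subset_ground hC
    refine Indep.isBasis_of_forall_insert ?_ (diff_subset_diff_right subset_union_right) ?_
    · rw [dual_indep_iff_exists']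
      exact ⟨diff_subset, B₁, hB₁, disjoint_sdiff_left.mono_right subset_union_left⟩
    · intro x hx
      have hxE : x ∈ M.E := hx.1.1
      have hxC : x ∉ C := hx.1.2
      have hxB₁ : x ∈ B₁ := by
        have := hx.2
        simp only [mem_diff, not_and, not_not] at this
        rcases this hxE with h | h
        exacts [h, absurd h hxC]
      rw [dep_iff]
      refine ⟨fun hcon ↦ ?_, insert_subset hxE (diff_subset.trans rfl.subset)⟩
      obtain ⟨-, B₂, hB₂, hdisj2⟩ := (dual_indep_iff_exists').1 hcon
      have hB₂sub : B₂ ⊆ (B₁ ∪ C) \ {x} := by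
        intro w hw
        have hwE : w ∈ M.E := hB₂.subset_ground hw
        have hwx : w ≠ x := fun h ↦ (hdisj2.ne_of_mem (mem_insert x _) hw) h.symm
        have hwK : w ∉ M.E \ (B₁ ∪ C) := fun h ↦
          (hdisj2.ne_of_mem (mem_insert_of_mem _ h) hw) rfl
        simp only [mem_diff, not_and, not_not] at hwK
        exact ⟨hwK hwE, hwx⟩
      have finB₁ : B₁.Finite := hE.subset hB₁.subset_ground
      have finB₂ : B₂.Finite := hE.subset hB₂.subset_ground
      have finJ : J.Finite := hE.subset hJ.indep.subset_ground
      have n1 : (B₂ ∩ C).ncard ≤ J.ncard := ncard_le_of_encard_le finJ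
        (indep_encard_le_basis (hB₂.indep.subset inter_subset_left) inter_subset_right hJ)
      have n2 : (B₂ \ C).ncard ≤ ((B₁ \ C) \ {x}).ncard := by
        refine ncard_le_ncard (fun w hw ↦ ?_) ((finB₁.diff (t := C)).diff (t := {x}))
        have := hB₂sub hw.1
        exact ⟨⟨this.1.resolve_right hw.2, hw.2⟩, this.2⟩
      have n3 : ((B₁ \ C) \ {x}).ncard < (B₁ \ C).ncard :=
        ncard_diff_singleton_lt_of_mem ⟨hxB₁, hxC⟩ (finB₁.diff (t := C))
      have n4 : B₂.ncard ≤ (B₂ ∩ C).ncard + (B₂ \ C).ncard := by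
        conv_lhs => rw [← inter_union_diff B₂ C]
        exact ncard_union_le _ _
      have n5 : B₁.ncard = (B₁ ∩ C).ncard + (B₁ \ C).ncard := by
        conv_lhs => rw [← inter_union_diff B₁ C]
        exact ncard_union_eq (disjoint_of_subset_left inter_subset_right disjoint_sdiff_right)
          (finB₁.inter_of_left C) (finB₁.diff (t := C))
      have n6 : B₂.ncard = B₁.ncard :=
        ncard_eq_of_encard_eq finB₁ (hB₂.encard_eq_encard_of_isBase hB₁)
      rw [← hJB₁] at n1
      omega

lemma indep_union_basis_of_basis {J₁ J₂ : Set α} (hE : M.E.Finite) (hIC : Disjoint I C)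
    (hJ1 : M.IsBasis J₁ C) (hJ2 : M.IsBasis J₂ C) (hind : M.Indep (I ∪ J₁)) :
    M.Indep (I ∪ J₂) := by
  have hUE : (I ∪ J₁) ∪ J₂ ⊆ M.E := union_subset hind.subset_ground hJ2.indep.subset_ground
  obtain ⟨P, hP, hJ₂P⟩ := hJ2.indep.subset_isBasis_of_subset (subset_union_right) hUE
  have hPC : P ∩ C = J₂ := (hJ2.eq_of_subset_indep (hP.indep.subset inter_subset_left)
    (subset_inter hJ₂P hJ2.subset) inter_subset_right).symm
  have hPdiff : P \ C ⊆ I := by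
    rintro w ⟨hw, hwC⟩
    rcases hP.subset hw with (h | h) | h
    · exact h
    · exact absurd (hJ1.subset h) hwC
    · exact absurd (hJ2.subset h) hwC
  have finI : I.Finite := hE.subset ((subset_union_left).trans hind.subset_ground)
  have finJ₁ : J₁.Finite := hE.subset hJ1.indep.subset_ground
  have finJ₂ : J₂.Finite := hE.subset hJ2.indep.subset_ground
  have finP : P.Finite := hE.subset hP.indep.subset_ground
  have c1 : (I ∪ J₁).ncard ≤ P.ncard := ncard_le_of_encard_le finP
    (indep_encard_le_basis hind subset_union_left hP)
  have c2 : (I ∪ J₁).ncard = I.ncard + J₁.ncard :=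
    ncard_union_eq (hIC.mono_right hJ1.subset) finI finJ₁
  have c3 : J₁.ncard = J₂.ncard := ncard_eq_of_encard_eq finJ₂ (basis_encard_eq hJ1 hJ2)
  have c4 : P.ncard = (P ∩ C).ncard + (P \ C).ncard := by
    conv_lhs => rw [← inter_union_diff P C]
    exact ncard_union_eq (disjoint_of_subset_left inter_subset_right disjoint_sdiff_right)
      (finP.inter_of_left C) (finP.diff (t := C))
  have c5 : (P ∩ C).ncard = J₂.ncard := by rw [hPC]
  have c6 : (P \ C).ncard ≤ I.ncard := ncard_le_ncard hPdiff finI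
  have hEq : P \ C = I := eq_of_subset_of_ncard_le hPdiff (by omega) finI
  have : I ∪ J₂ = P := by rw [← hPC, ← hEq, diff_union_inter]
  rw [this]
  exact hP.indep

lemma con_indep_iff_forall (hE : M.E.Finite) (hC : C ⊆ M.E) :
    (con M C).Indep I ↔ I ⊆ M.E \ C ∧ ∀ J, M.IsBasis J C → M.Indep (I ∪ J) := by
  rw [con_indep_iff hE hC]
  refine and_congr_right (fun h1 ↦ ?_)
  constructor
  · rintro ⟨J₁, hJ₁, hind⟩
    exact fun J₂ hJ₂ ↦ indep_union_basis_of_basis hE (subset_diff.1 h1).2 hJ₁ hJ₂ hind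
  · intro h2
    obtain ⟨J, hJ⟩ := M.exists_isBasis C hC
    exact ⟨J, hJ, h2 J hJ⟩

lemma con_base_diff_iff (hB : M.IsBase B) (hF : F ⊆ M.E) :
    (con M F).IsBase (B \ F) ↔ (M ↾ F).IsBase (B ∩ F) := by
  rw [isBase_restrict_iff hF, hB.inter_isBasis_iff_compl_inter_isBasis_dual hF, con]
  have hsub : B \ F ⊆ (del M✶ F).E := by
    rw [del, restrict_ground_eq, dual_ground]
    exact diff_subset_diff_left hB.subset_ground
  rw [dual_isBase_iff hsub]
  have hgr : (del M✶ F).E = M.E \ F := by rw [del, restrict_ground_eq, dual_ground]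
  rw [del, ← dual_ground (M := M), isBase_restrict_iff (by rw [dual_ground]; exact diff_subset)]
  have hset : (M✶ ↾ (M✶.E \ F)).E \ (B \ F) = (M.E \ B) ∩ (M✶.E \ F) := by
    rw [restrict_ground_eq, dual_ground]
    ext w
    simp only [mem_diff, mem_inter_iff, dual_ground]
    tauto
  rw [hset, dual_ground]

lemma con_restrict_comm (hE : M.E.Finite) (hFG : F ⊆ G) (hG : G ⊆ M.E) :
    con (M ↾ G) F = (con M F) ↾ (G \ F) := by
  have hF : F ⊆ M.E := hFG.trans hG
  refine ext_indep ?_ (fun ⦃I⦄ hI ↦ ?_)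
  · simp [con_ground]
  · rw [restrict_indep_iff,
      con_indep_iff (M := M ↾ G) (by simpa using hE.subset hG) (by simpa using hFG),
      con_indep_iff hE hF]
    simp only [restrict_ground_eq, restrict_indep_iff]
    constructor
    · rintro ⟨hIG, J, hJb, hind, -⟩
      rw [isBasis_restrict_iff hG] at hJb
      have h1 : I ⊆ M.E \ F :=
        subset_diff.2 ⟨(subset_diff.1 hIG).1.trans hG, (subset_diff.1 hIG).2⟩
      exact ⟨⟨h1, J, hJb.1, hind⟩, hIG⟩
    · rintro ⟨⟨hIE, J, hJ, hind⟩, hIG⟩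
      refine ⟨hIG, J, ?_, hind, union_subset (subset_diff.1 hIG).1 (hJ.subset.trans hFG)⟩
      rw [isBasis_restrict_iff hG]
      exact ⟨hJ, hFG⟩

end Con

section Transfer

lemma fundCocct_def (M : Matroid α) (B : Set α) (b : α) :
    fundCocct M B b = fundCct M✶ (M.E \ B) b := rfl

lemma fundCct_restrict_eq (hE : M.E.Finite) (hB : M.IsBase B) (hR : R ⊆ M.E)
    (hBR : (M ↾ R).IsBase (B ∩ R)) (he : e ∈ R \ B) :
    fundCct (M ↾ R) (B ∩ R) e = fundCct M B e ∧ fundCct M B e ⊆ insert e (B ∩ R) := by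
  have hE' : (M ↾ R).E.Finite := by rw [restrict_ground_eq]; exact hE.subset hR
  have he' : (M ↾ R).Dep (insert e (B ∩ R)) := by
    refine hBR.insert_dep ⟨?_, fun h ↦ he.2 h.1⟩
    rw [restrict_ground_eq]; exact he.1
  have spec' := fundCct_spec hE' hBR.indep he'
  have hcct : Cct M (fundCct (M ↾ R) (B ∩ R) e) ∧ fundCct (M ↾ R) (B ∩ R) e ⊆ R :=
    (cct_restrict hR).1 spec'.1
  have heB : M.Dep (insert e B) := hB.insert_dep ⟨hR he.1, he.2⟩
  have heq : fundCct (M ↾ R) (B ∩ R) e = fundCct M B e :=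
    eq_fundCct_of_cct hE hB.indep heB hcct.1
      (spec'.2.trans (insert_subset_insert inter_subset_left))
  exact ⟨heq, heq ▸ spec'.2⟩

lemma fundCct_con_eq (hE : M.E.Finite) (hB : M.IsBase B) (hW : W ⊆ M.E)
    (hBW : (M ↾ W).IsBase (B ∩ W)) (he : e ∈ M.E \ (B ∪ W)) :
    fundCct (con M W) (B \ W) e = fundCct M B e \ W := by
  have heB : e ∉ B := fun h ↦ he.2 (Or.inl h)
  have heW : e ∉ W := fun h ↦ he.2 (Or.inr h)
  have hBcon : (con M W).IsBase (B \ W) := (con_base_diff_iff hB hW).2 hBW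
  have hE' : (con M W).E.Finite := (hE.diff (t := W))
  have he' : (con M W).Dep (insert e (B \ W)) :=
    hBcon.insert_dep ⟨⟨he.1, heW⟩, fun h ↦ heB h.1⟩
  have hdepB : M.Dep (insert e B) := hB.insert_dep ⟨he.1, heB⟩
  have specM := fundCct_spec hE hB.indep hdepB
  set C := fundCct M B e with hC
  have hCE : C ⊆ M.E := specM.1.1.subset_ground
  have heC : e ∈ C := mem_fundCct_self hE hB.indep hdepB
  have hWbasis : M.IsBasis (B ∩ W) W := (isBase_restrict_iff hW).1 hBW
  have hCWi : M.Indep (C ∩ W) := by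
    rw [← not_dep_iff (inter_subset_left.trans hCE)]
    intro hdep
    exact heW (((specM.1.2 hdep inter_subset_left) heC).2)
  obtain ⟨J, hJ, hCWJ⟩ := hCWi.subset_isBasis_of_subset inter_subset_right hW
  have hCdep : (con M W).Dep (C \ W) := by
    rw [dep_iff]
    constructor
    · intro hcon
      rw [con_indep_iff_forall hE hW] at hcon
      refine specM.1.1.not_indep ((hcon.2 J hJ).subset (fun w hw ↦ ?_))
      by_cases hwW : w ∈ W
      · exact Or.inr (hCWJ ⟨hw, hwW⟩)
      · exact Or.inl ⟨hw, hwW⟩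
    · rw [con_ground]
      exact diff_subset_diff_left hCE
  have hCsub : C \ W ⊆ insert e (B \ W) := by
    intro w hw
    rcases specM.2 hw.1 with rfl | hwB
    · exact mem_insert _ _
    · exact mem_insert_of_mem _ ⟨hwB, hw.2⟩
  obtain ⟨C', hC', hC's⟩ := exists_cct_subset hCdep ((hE.subset hCE).diff (t := W))
  have hsub1 : fundCct (con M W) (B \ W) e ⊆ C \ W := by
    rw [← eq_fundCct_of_cct hE' hBcon.indep he' hC' (hC's.trans hCsub)]
    exact hC's
  refine hsub1.antisymm (fun x hx ↦ ?_)
  rcases eq_or_ne x e with rfl | hxe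
  · exact mem_fundCct_self hE' hBcon.indep he'
  have hxB : x ∈ B := (specM.2 hx.1).resolve_left hxe
  have hxW : x ∉ W := hx.2
  have hindM : M.Indep (insert e B \ {x}) :=
    indep_insert_diff_of_cct hE hB.indep hdepB specM.1 specM.2 hx.1
  have hseteq : insert e (B \ W) \ {x} = ((insert e B \ {x}) \ W) := by
    ext w
    simp only [mem_diff, mem_insert_iff, mem_singleton_iff]
    constructor
    · rintro ⟨h1 | h1, h2⟩
      · exact ⟨⟨Or.inl h1, h2⟩, h1 ▸ heW⟩
      · exact ⟨⟨Or.inr h1.1, h2⟩, h1.2⟩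
    · rintro ⟨⟨h1 | h1, h2⟩, h3⟩
      · exact ⟨Or.inl h1, h2⟩
      · exact ⟨Or.inr ⟨h1, h3⟩, h2⟩
  have hconind : (con M W).Indep (insert e (B \ W) \ {x}) := by
    rw [hseteq, con_indep_iff hE hW]
    refine ⟨diff_subset_diff_left (diff_subset.trans (insert_subset he.1 hB.subset_ground)),
      B ∩ W, hWbasis, ?_⟩
    have : ((insert e B \ {x}) \ W) ∪ (B ∩ W) = insert e B \ {x} := by
      ext w
      simp only [mem_union, mem_diff, mem_insert_iff, mem_inter_iff, mem_singleton_iff]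
      constructor
      · rintro (⟨h1, h2⟩ | ⟨h1, h2⟩)
        · exact h1
        · exact ⟨Or.inr h1, fun hcon ↦ hxW (hcon ▸ h2)⟩
      · rintro ⟨h1 | h1, h2⟩
        · exact Or.inl ⟨⟨Or.inl h1, h2⟩, h1 ▸ heW⟩
        · by_cases hwW : w ∈ W
          · exact Or.inr ⟨h1, hwW⟩
          · exact Or.inl ⟨⟨Or.inr h1, h2⟩, hwW⟩
    rw [this]
    exact hindM
  exact mem_fundCct_of_indep_diff hE' hBcon.indep he'
    (hCsub hx) hconind

lemma fundCocct_con_eq (hE : M.E.Finite) (hB : M.IsBase B) (hW : W ⊆ M.E)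
    (hBW : (M ↾ W).IsBase (B ∩ W)) (hb : b ∈ B \ W) :
    fundCocct (con M W) (B \ W) b = fundCocct M B b ∧
      fundCocct M B b ⊆ insert b ((M.E \ B) ∩ (M.E \ W)) := by
  have hWbasis : M.IsBasis (B ∩ W) W := (isBase_restrict_iff hW).1 hBW
  have hdualbasis := hB.compl_inter_isBasis_of_inter_isBasis hWbasis
  have hdualbase : (M✶ ↾ (M.E \ W)).IsBase ((M.E \ B) ∩ (M.E \ W)) := by
    rw [isBase_restrict_iff (show M.E \ W ⊆ M✶.E by rw [dual_ground]; exact diff_subset)]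
    exact hdualbasis
  have hE' : M✶.E.Finite := by rwa [dual_ground]
  have hres := fundCct_restrict_eq hE' hB.compl_isBase_dual
    (show M.E \ W ⊆ M✶.E by rw [dual_ground]; exact diff_subset) hdualbase
    ⟨⟨hB.subset_ground hb.1, hb.2⟩, fun h ↦ h.2 hb.1⟩
  have hgr : (con M W).E \ (B \ W) = (M.E \ B) ∩ (M.E \ W) := by
    rw [con_ground]
    ext w
    simp only [mem_diff, mem_inter_iff]
    tauto
  have hL : fundCocct (con M W) (B \ W) b =
      fundCct (M✶ ↾ (M.E \ W)) ((M.E \ B) ∩ (M.E \ W)) b := by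
    rw [fundCocct_def, con_dual, hgr]
  rw [hL, hres.1, fundCocct_def]
  exact ⟨rfl, hres.2⟩

lemma fundCocct_restrict_eq (hE : M.E.Finite) (hB : M.IsBase B) (hF : F ⊆ M.E)
    (hBF : (M ↾ F).IsBase (B ∩ F)) (hb : b ∈ B ∩ F) :
    fundCocct (M ↾ F) (B ∩ F) b = fundCocct M B b ∩ F := by
  have hFbasis : M.IsBasis (B ∩ F) F := (isBase_restrict_iff hF).1 hBF
  have hdualbase : (M✶ ↾ (M.E \ F)).IsBase ((M.E \ B) ∩ (M.E \ F)) := by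
    rw [isBase_restrict_iff (show M.E \ F ⊆ M✶.E by rw [dual_ground]; exact diff_subset)]
    exact hB.compl_inter_isBasis_of_inter_isBasis hFbasis
  have hE' : M✶.E.Finite := by rwa [dual_ground]
  have hcon := fundCct_con_eq hE' hB.compl_isBase_dual
    (show M.E \ F ⊆ M✶.E by rw [dual_ground]; exact diff_subset) hdualbase
    ⟨hF hb.2, by rintro (h | h); exacts [h.2 hb.1, h.2 hb.2]⟩
  have hgr : (M ↾ F).E \ (B ∩ F) = (M.E \ B) \ (M.E \ F) := by
    rw [restrict_ground_eq]
    ext w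
    simp only [mem_diff]
    constructor
    · rintro ⟨h1, h2⟩
      exact ⟨⟨hF h1, fun hwB ↦ h2 ⟨hwB, h1⟩⟩, fun h ↦ h.2 h1⟩
    · rintro ⟨⟨h1, h2⟩, h3⟩
      have hwF : w ∈ F := by by_contra h; exact h3 ⟨h1, h⟩
      exact ⟨hwF, fun h ↦ h2 h.1⟩
  have hL : fundCocct (M ↾ F) (B ∩ F) b =
      fundCct (con M✶ (M.E \ F)) ((M.E \ B) \ (M.E \ F)) b := by
    rw [fundCocct_def, restrict_dual hF, hgr]
  have hCE : fundCct M✶ (M.E \ B) b ⊆ M.E := by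
    have hdep : M✶.Dep (insert b (M.E \ B)) :=
      hB.compl_isBase_dual.insert_dep ⟨hF hb.2, fun h ↦ h.2 hb.1⟩
    have := (fundCct_spec hE' hB.compl_isBase_dual.indep hdep).1.1.subset_ground
    rwa [dual_ground] at this
  rw [hL, hcon, fundCocct_def]
  ext w
  simp only [mem_diff, mem_inter_iff]
  constructor
  · rintro ⟨h1, h2⟩
    have hwE : w ∈ M.E := hCE h1
    exact ⟨h1, by by_contra h; exact h2 ⟨hwE, h⟩⟩
  · rintro ⟨h1, h2⟩
    exact ⟨h1, fun h ↦ h.2 h2⟩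

lemma actInt_con_eq [LinearOrder α] (hE : M.E.Finite) (hB : M.IsBase B) (hW : W ⊆ M.E)
    (hBW : (M ↾ W).IsBase (B ∩ W)) :
    ActInt (con M W) (B \ W) = ActInt M B \ W := by
  ext b
  simp only [ActInt, mem_setOf_eq, mem_diff]
  constructor
  · rintro ⟨hbBW, hleast⟩
    rw [(fundCocct_con_eq hE hB hW hBW hbBW).1] at hleast
    exact ⟨⟨hbBW.1, hleast⟩, hbBW.2⟩
  · rintro ⟨⟨hbB, hleast⟩, hbW⟩
    refine ⟨⟨hbB, hbW⟩, ?_⟩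
    rw [(fundCocct_con_eq hE hB hW hBW ⟨hbB, hbW⟩).1]
    exact hleast

lemma actExt_restrict_eq [LinearOrder α] (hE : M.E.Finite) (hB : M.IsBase B) (hR : R ⊆ M.E)
    (hBR : (M ↾ R).IsBase (B ∩ R)) :
    ActExt (M ↾ R) (B ∩ R) = ActExt M B ∩ R := by
  ext e
  simp only [ActExt, mem_setOf_eq, mem_inter_iff, mem_diff, restrict_ground_eq]
  constructor
  · rintro ⟨⟨heR, henB⟩, hleast⟩
    have heB : e ∉ B := fun h ↦ henB ⟨h, heR⟩
    rw [(fundCct_restrict_eq hE hB hR hBR ⟨heR, heB⟩).1] at hleast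
    exact ⟨⟨⟨hR heR, heB⟩, hleast⟩, heR⟩
  · rintro ⟨⟨⟨heE, heB⟩, hleast⟩, heR⟩
    refine ⟨⟨heR, fun h ↦ heB h.1⟩, ?_⟩
    rw [(fundCct_restrict_eq hE hB hR hBR ⟨heR, heB⟩).1]
    exact hleast

lemma fundCct_subset_of_restrict_base (hE : M.E.Finite) (hB : M.IsBase B) (hF : F ⊆ M.E)
    (hBF : (M ↾ F).IsBase (B ∩ F)) (he : e ∈ F \ B) :
    fundCct M B e ⊆ F :=
  (fundCct_restrict_eq hE hB hF hBF he).2.trans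
    (insert_subset he.1 inter_subset_right)

lemma fundCocct_disj_of_restrict_base (hE : M.E.Finite) (hB : M.IsBase B) (hW : W ⊆ M.E)
    (hBW : (M ↾ W).IsBase (B ∩ W)) (hb : b ∈ B \ W) :
    ∀ c ∈ fundCocct M B b, c ∉ W := by
  intro c hc
  rcases (fundCocct_con_eq hE hB hW hBW hb).2 hc with rfl | h
  · exact hb.2
  · exact h.2.2

lemma mem_fundCocct_self (hE : M.E.Finite) (hB : M.IsBase B) (hb : b ∈ B) :
    b ∈ fundCocct M B b := by
  rw [fundCocct_def]
  have hE' : M✶.E.Finite := by rwa [dual_ground]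
  exact mem_fundCct_self hE' hB.compl_isBase_dual.indep
    (hB.compl_isBase_dual.insert_dep ⟨hB.subset_ground hb, fun h ↦ h.2 hb⟩)

end Transfer

theorem stmt17' {α : Type*} [LinearOrder α] (M : Matroid α) [M.Finite]
    (B : Set α) (hB : M.IsBase B) (X Y Z : Set α)
    (hX : X ⊆ ActInt M B) (hYZ : X = Y ∪ Z) (hdisj : Disjoint Y Z)
    (FX FY : Set α) (hFX : DecompSet M B X FX) (hFY : DecompSet M B Y FY) :
    Z ⊆ ActInt (M ↾ FY) (B ∩ FY) ∧
    DecompSet (M ↾ FY) (B ∩ FY) Z FX := by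
  obtain ⟨hFXE, hFXb, hFXi, hFXe, hFXci, hFXce⟩ := hFX
  obtain ⟨hFYE, hFYb, hFYi, hFYe, hFYci, hFYce⟩ := hFY
  have hE : M.E.Finite := M.ground_finite
  have hBE : B ⊆ M.E := hB.subset_ground
  have hXA : X = ActInt M B \ FX := by rw [← hFXci, actInt_con_eq hE hB hFXE hFXb]
  have hYA : Y = ActInt M B \ FY := by rw [← hFYci, actInt_con_eq hE hB hFYE hFYb]
  have hYX : Y ⊆ X := hYZ ▸ subset_union_left
  have hZX : Z ⊆ X := hYZ ▸ subset_union_right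
  -- Key step : FX ⊆ FY
  have hkey : FX ⊆ FY := by
    by_contra hne
    have hDne : (FX \ FY).Nonempty := by
      rw [nonempty_iff_ne_empty]
      intro h
      exact hne (fun w hw ↦ by_contra (fun hw' ↦ (h ▸ (⟨hw, hw'⟩ : w ∈ FX \ FY) : w ∈ (∅ : Set α))))
    obtain ⟨m, hmD, hmin⟩ := Set.exists_min_image (FX \ FY) id (hE.subset (diff_subset.trans hFXE)) hDne
    simp only [id] at hmin
    have hmFX : m ∈ FX := hmD.1
    have hmFY : m ∉ FY := hmD.2
    have hmE : m ∈ M.E := hFXE hmFX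
    have hmA : m ∉ ActInt M B := by
      intro h
      have hmY : m ∈ Y := by rw [hYA]; exact ⟨h, hmFY⟩
      have hmX : m ∈ ActInt M B \ FX := hXA ▸ hYX hmY
      exact hmX.2 hmFX
    by_cases hmB : m ∈ B
    · -- Case m ∈ B
      have hmBFX : m ∈ B ∩ FX := ⟨hmB, hmFX⟩
      have hmnotint : m ∉ ActInt (M ↾ FX) (B ∩ FX) := by
        rw [hFXi]
        exact fun h ↦ hmA h.1
      have hnl : ¬ IsLeast (fundCocct M B m ∩ FX) m := by
        intro h
        refine hmnotint ⟨hmBFX, ?_⟩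
        rwa [fundCocct_restrict_eq hE hB hFXE hFXb hmBFX]
      have hmem : m ∈ fundCocct M B m ∩ FX := ⟨mem_fundCocct_self hE hB hmB, hmFX⟩
      obtain ⟨c, hcmem, hclt⟩ : ∃ c ∈ fundCocct M B m ∩ FX, c < m := by
        by_contra h
        push_neg at h
        exact hnl ⟨hmem, fun c hc ↦ h c hc⟩
      have hcFY : c ∉ FY :=
        fundCocct_disj_of_restrict_base hE hB hFYE hFYb ⟨hmB, hmFY⟩ c hcmem.1
      exact absurd (hmin c ⟨hcmem.2, hcFY⟩) (not_le.2 hclt)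
    · -- Case m ∉ B
      have hBconY : (con M FY).IsBase (B \ FY) := (con_base_diff_iff hB hFYE).2 hFYb
      have hE' : (con M FY).E.Finite := hE.diff (t := FY)
      have hmgr : m ∈ (con M FY).E \ (B \ FY) := ⟨⟨hmE, hmFY⟩, fun h ↦ hmB h.1⟩
      have hdep : (con M FY).Dep (insert m (B \ FY)) := hBconY.insert_dep hmgr
      have spec := fundCct_spec hE' hBconY.indep hdep
      have hmnotext : m ∉ ActExt (con M FY) (B \ FY) := by rw [hFYce]; exact notMem_empty m
      have hnl : ¬ IsLeast (fundCct (con M FY) (B \ FY) m) m :=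
        fun h ↦ hmnotext ⟨hmgr, h⟩
      have hmem : m ∈ fundCct (con M FY) (B \ FY) m :=
        mem_fundCct_self hE' hBconY.indep hdep
      obtain ⟨c, hcmem, hclt⟩ : ∃ c ∈ fundCct (con M FY) (B \ FY) m, c < m := by
        by_contra h
        push_neg at h
        exact hnl ⟨hmem, fun c hc ↦ h c hc⟩
      have hceq := fundCct_con_eq hE hB hFYE hFYb
        (⟨hmE, fun h ↦ h.elim hmB hmFY⟩ : m ∈ M.E \ (B ∪ FY))
      have hcM : c ∈ fundCct M B m \ FY := hceq ▸ hcmem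
      have hcFX : c ∈ FX :=
        fundCct_subset_of_restrict_base hE hB hFXE hFXb ⟨hmFX, hmB⟩ hcM.1
      exact absurd (hmin c ⟨hcFX, hcM.2⟩) (not_le.2 hclt)
  -- assembly
  have hresrw : (M ↾ FY) ↾ FX = M ↾ FX := restrict_restrict_eq M hkey
  have hBsets : B ∩ FY ∩ FX = B ∩ FX := by
    rw [inter_assoc, inter_eq_self_of_subset_right hkey]
  have hW' : FX ⊆ (M ↾ FY).E := by rw [restrict_ground_eq]; exact hkey
  have hBW' : ((M ↾ FY) ↾ FX).IsBase (B ∩ FY ∩ FX) := by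
    rw [hresrw, hBsets]; exact hFXb
  have hE'' : (M ↾ FY).E.Finite := by rw [restrict_ground_eq]; exact hE.subset hFYE
  constructor
  · -- Z ⊆ ActInt (M ↾ FY) (B ∩ FY)
    rw [hFYi]
    exact fun z hz ↦ ⟨hX (hZX hz), fun hzY ↦ (hdisj.ne_of_mem hzY hz) rfl⟩
  refine ⟨hW', by rw [hresrw, hBsets]; exact hFXb, ?_, ?_, ?_, ?_⟩
  · rw [hresrw, hBsets, hFXi, hFYi, hYZ, ← diff_diff]
  · rw [hresrw, hBsets, hFXe, hFYe]
  · rw [actInt_con_eq hE'' hFYb hW' hBW', hFYi]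
    rw [diff_diff, union_comm, ← diff_diff, ← hXA, hYZ, union_diff_left,
      (hdisj.symm).sdiff_eq_left]
  · have hcomm : con (M ↾ FY) FX = (con M FX) ↾ (FY \ FX) := con_restrict_comm hE hkey hFYE
    have hsetid : (B ∩ FY) \ FX = (B \ FX) ∩ (FY \ FX) := by
      ext w
      simp only [mem_diff, mem_inter_iff]
      tauto
    have hB₂ : (con M FX).IsBase (B \ FX) := (con_base_diff_iff hB hFXE).2 hFXb
    have hE₂ : (con M FX).E.Finite := hE.diff (t := FX)
    have hR₂ : FY \ FX ⊆ (con M FX).E := diff_subset_diff_left hFYE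
    have hBR₂ : ((con M FX) ↾ (FY \ FX)).IsBase ((B \ FX) ∩ (FY \ FX)) := by
      rw [← hcomm, ← hsetid]
      exact (con_base_diff_iff hFYb hW').2 hBW'
    rw [hcomm, hsetid, actExt_restrict_eq hE₂ hB₂ hR₂ hBR₂, hFXce, empty_inter]

end ActiveBij


namespace ActiveBij

/-- The subset `F(X)` can be computed in two steps : if `X = Y ⊎ Z`, then `Z` consists of
internally active elements of the base `B ∩ F(Y)` of `M(F(Y))`, and `F(X)` is obtained by
applying the construction to `Z` relative to this base of the restriction `M(F(Y))`. -/
theorem stmt17 {α : Type*} [LinearOrder α] (M : Matroid α) [M.Finite]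
    (B : Set α) (hB : M.IsBase B) (X Y Z : Set α)
    (hX : X ⊆ ActInt M B) (hYZ : X = Y ∪ Z) (hdisj : Disjoint Y Z)
    (FX FY : Set α) (hFX : DecompSet M B X FX) (hFY : DecompSet M B Y FY) :
    Z ⊆ ActInt (M ↾ FY) (B ∩ FY) ∧
    DecompSet (M ↾ FY) (B ∩ FY) Z FX := by
  exact stmt17' M B hB X Y Z hX hYZ hdisj FX FY hFX hFY

end ActiveBij
end
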